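/- With P_{g+1} the block matrix defined from P_g, B_g, D_g as in the edge corona construction, if Y = (Y_1,...,Y_q) with each Y_i ∈ ℝ^m and Y_1 + Y_2 + ... + Y_q = 0, then the vector w with top block 0 and lower blocks Y_1,...,Y_q satisfies P_{g+1} w = (−1/(q+1)) w. -/
import Mathlib


open Matrix

/-- Edge corona spectral lemma, eigenvalue `−1/(q+1)` from block-sum-zero vectors:
if `Y = (Y_1, …, Y_q)` with `Y_1 + ⋯ + Y_q = 0`, then the vector with top block `0`
and lower blocks `Y_1, …, Y_q` is an eigenvector of the block matrix `P_{g+1}`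
with eigenvalue `−1/(q+1)`. -/
theorem edge_corona_eigen_sum_zero (n m q : ℕ) (hq : 2 ≤ q)
    (A : Matrix (Fin n) (Fin n) ℝ) (d : Fin n → ℝ) (hd : ∀ i, 0 < d i)
    (B : Matrix (Fin n) (Fin m) ℝ)
    (hBB : B * Bᵀ = A + Matrix.diagonal d)
    (Pg : Matrix (Fin n) (Fin n) ℝ)
    (hPg : Pg = Matrix.diagonal (fun i => (Real.sqrt (d i))⁻¹) * A *
      Matrix.diagonal (fun i => (Real.sqrt (d i))⁻¹))
    (Pnew : Matrix (Fin n ⊕ Fin q × Fin m) (Fin n ⊕ Fin q × Fin m) ℝ)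
    (hP11 : ∀ i j, Pnew (Sum.inl i) (Sum.inl j) = (1 / ((q : ℝ) + 1)) * Pg i j)
    (hP12 : ∀ i a e, Pnew (Sum.inl i) (Sum.inr (a, e))
      = (1 / ((q : ℝ) + 1)) * ((Real.sqrt (d i))⁻¹ * B i e))
    (hP21 : ∀ a e j, Pnew (Sum.inr (a, e)) (Sum.inl j)
      = (1 / ((q : ℝ) + 1)) * (B j e * (Real.sqrt (d j))⁻¹))
    (hP22 : ∀ a e b f, Pnew (Sum.inr (a, e)) (Sum.inr (b, f))
      = if a = b then 0 else if e = f then (1 / ((q : ℝ) + 1)) else 0)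
    (Y : Fin q → Fin m → ℝ) (hY : ∀ e, ∑ a, Y a e = 0)
    (w : (Fin n ⊕ Fin q × Fin m) → ℝ)
    (hw1 : ∀ i, w (Sum.inl i) = 0)
    (hw2 : ∀ a e, w (Sum.inr (a, e)) = Y a e) :
    Pnew.mulVec w = (-(1 / ((q : ℝ) + 1))) • w := by
  funext x
  simp only [mulVec, dotProduct, Fintype.sum_sum_type, Pi.smul_apply, smul_eq_mul]
  cases x with
  | inl i =>
    simp only [hw1, mul_zero, Finset.sum_const_zero, zero_add]
    rw [Fintype.sum_prod_type]
    have : ∀ a : Fin q, ∑ e, Pnew (Sum.inl i) (Sum.inr (a, e)) * w (Sum.inr (a, e))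
        = ∑ e, (1 / ((q : ℝ) + 1)) * ((Real.sqrt (d i))⁻¹ * B i e) * Y a e := by
      intro a; exact Finset.sum_congr rfl fun e _ => by rw [hP12, hw2]
    rw [Finset.sum_congr rfl fun a _ => this a, Finset.sum_comm]
    have : ∀ e : Fin m, ∑ a, (1 / ((q : ℝ) + 1)) * ((Real.sqrt (d i))⁻¹ * B i e) * Y a e = 0 := by
      intro e; rw [← Finset.mul_sum, hY, mul_zero]
    simp only [one_div] at this
    simp [this]
  | inr p =>
    obtain ⟨a, e⟩ := p
    simp only [hw1, mul_zero, Finset.sum_const_zero, zero_add]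
    rw [Fintype.sum_prod_type]
    have key : ∀ b : Fin q, ∑ f, Pnew (Sum.inr (a, e)) (Sum.inr (b, f)) * w (Sum.inr (b, f))
        = if a = b then 0 else (1 / ((q : ℝ) + 1)) * Y b e := by
      intro b
      by_cases hab : a = b
      · simp [hP22, hab]
      · have : ∀ f : Fin m, Pnew (Sum.inr (a, e)) (Sum.inr (b, f)) * w (Sum.inr (b, f))
            = (if e = f then (1 / ((q : ℝ) + 1)) else 0) * Y b f := by
          intro f; rw [hP22, hw2, if_neg hab]
        rw [Finset.sum_congr rfl fun f _ => this f]
        simp [hab, Finset.sum_ite_eq (Finset.univ : Finset (Fin m)) e (fun f => (1 / ((q : ℝ) + 1)) * Y b f)]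
    rw [Finset.sum_congr rfl fun b _ => key b]
    have h1 : ∑ b, (if a = b then 0 else (1 / ((q : ℝ) + 1)) * Y b e)
        = ∑ b, ((1 / ((q : ℝ) + 1)) * Y b e - if a = b then (1 / ((q : ℝ) + 1)) * Y b e else 0) := by
      apply Finset.sum_congr rfl; intro b _; by_cases h : a = b <;> simp [h]
    rw [h1, Finset.sum_sub_distrib, ← Finset.mul_sum, hY, mul_zero,
      Finset.sum_ite_eq Finset.univ a (fun b => (1 / ((q : ℝ) + 1)) * Y b e)]
    simp [hw2]
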